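/- Let κ ≥ 4, let γ > 0, and let ξ₁, ξ₂ be continuous real-valued functions on the closure of Ω with |ξ_i(x)| ≤ 1 for all x in the closure of Ω and ∫_Ω g(ξ_i(x)) dx ≥ γ for i = 1, 2. Then for every x in the closure of Ω, |N_κ[ξ₁](x) − N_κ[ξ₂](x)| ≤ C*_γ · κ · sup_{y∈closure(Ω)} |ξ₁(y) − ξ₂(y)|, where C*_γ = 3/2 + C_γ/4 and C_γ = 4|Ω|/γ + 2|Ω|²/γ². -/

import Mathlib

open MeasureTheory

private theorem aux_flip {a b : ℝ} (ha : |a| ≤ 1) (hb : |b| ≤ 1) :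
    |(a - a^3) - (b - b^3)| ≤ 2 * |a - b| := by
  have h : (a - a^3) - (b - b^3) = (a - b) * (1 - (a^2 + a*b + b^2)) := by ring
  rw [h, abs_mul]
  obtain ⟨ha1, ha2⟩ := abs_le.mp ha
  obtain ⟨hb1, hb2⟩ := abs_le.mp hb
  have h2 : |1 - (a^2 + a*b + b^2)| ≤ 2 := by
    rw [abs_le]; constructor <;> nlinarith [sq_nonneg (a+b), sq_nonneg (a-b)]
  calc |a-b| * |1 - (a^2+a*b+b^2)| ≤ |a-b| * 2 :=
        mul_le_mul_of_nonneg_left h2 (abs_nonneg _)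
    _ = 2 * |a-b| := by ring

private theorem aux_glip {a b : ℝ} (ha : |a| ≤ 1) (hb : |b| ≤ 1) :
    |(1 - a^2) - (1 - b^2)| ≤ 2 * |a - b| := by
  have h : (1 - a^2) - (1 - b^2) = (a - b) * (-(a+b)) := by ring
  rw [h, abs_mul]
  obtain ⟨ha1, ha2⟩ := abs_le.mp ha
  obtain ⟨hb1, hb2⟩ := abs_le.mp hb
  have h2 : |(-(a+b))| ≤ 2 := by rw [abs_le]; constructor <;> nlinarith
  calc |a-b| * |(-(a+b))| ≤ |a-b| * 2 := mul_le_mul_of_nonneg_left h2 (abs_nonneg _)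
    _ = 2 * |a-b| := by ring

private theorem aux_fbd {t : ℝ} (h : |t| ≤ 1) : |t - t^3| ≤ 1 := by
  have he : t - t^3 = t * (1 - t^2) := by ring
  rw [he, abs_mul]
  obtain ⟨h1, h2⟩ := abs_le.mp h
  have hg : |1 - t^2| ≤ 1 := by rw [abs_le]; constructor <;> nlinarith
  calc |t| * |1 - t^2| ≤ 1 * 1 := mul_le_mul h hg (abs_nonneg _) zero_le_one
    _ = 1 := by ring

private theorem aux_gbd {t : ℝ} (h : |t| ≤ 1) : |1 - t^2| ≤ 1 := by
  obtain ⟨h1, h2⟩ := abs_le.mp h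
  rw [abs_le]; constructor <;> nlinarith

private theorem aux_final {k S p T : ℝ} (hk : 4 ≤ k) (hS0 : 0 ≤ S) (hp : 0 ≤ p)
    (hT : T ≤ 4 * S * p + 2 * S * (p * p)) :
    k * S + 2 * S + T ≤ (3/2) * k * S + k * S * p + (k / 2) * S * (p * p) := by
  have k1 : 0 ≤ S * (k - 4) := mul_nonneg hS0 (by linarith)
  have k2 : 0 ≤ S * p * (k - 4) := mul_nonneg (mul_nonneg hS0 hp) (by linarith)
  have k3 : 0 ≤ S * (p * p) * (k - 4) := mul_nonneg (mul_nonneg hS0 (mul_nonneg hp hp)) (by linarith)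
  nlinarith [k1, k2, k3, hT]

/-- Lipschitz-type bound for the stabilized nonlinear term N_κ[ξ] = κξ + f(ξ) − λ_ξ g(ξ):
if κ ≥ 4, |ξᵢ| ≤ 1 on the closure of Ω and ∫_Ω g(ξᵢ) ≥ γ > 0 for i = 1,2, then for every
x in the closure of Ω, |N_κ[ξ₁](x) − N_κ[ξ₂](x)| ≤ C*_γ κ sup_{closure Ω} |ξ₁ − ξ₂| with
C*_γ = 3/2 + C_γ/4 and C_γ = 4|Ω|/γ + 2|Ω|²/γ², where f(x) = x − x³, g(x) = 1 − x² and
λ_ξ = (∫_Ω f(ξ)) / (∫_Ω g(ξ)). -/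
theorem stmt_13 (d : ℕ) (hd : 1 ≤ d) (Ω : Set (Fin d → ℝ))
    (hne : Ω.Nonempty) (hopen : IsOpen Ω) (hconn : IsConnected Ω)
    (hbdd : Bornology.IsBounded Ω) (hvol : volume Ω < ⊤)
    (κ : ℝ) (hκ : κ ≥ 4) (γ : ℝ) (hγ : γ > 0)
    (ξ₁ ξ₂ : (Fin d → ℝ) → ℝ)
    (hcont₁ : ContinuousOn ξ₁ (closure Ω)) (hcont₂ : ContinuousOn ξ₂ (closure Ω))
    (hbound₁ : ∀ x ∈ closure Ω, |ξ₁ x| ≤ 1) (hbound₂ : ∀ x ∈ closure Ω, |ξ₂ x| ≤ 1)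
    (hγ₁ : γ ≤ ∫ x in Ω, (1 - ξ₁ x ^ 2)) (hγ₂ : γ ≤ ∫ x in Ω, (1 - ξ₂ x ^ 2)) :
    ∀ x ∈ closure Ω,
      |(κ * ξ₁ x + (ξ₁ x - ξ₁ x ^ 3) -
          ((∫ y in Ω, (ξ₁ y - ξ₁ y ^ 3)) / ∫ y in Ω, (1 - ξ₁ y ^ 2)) * (1 - ξ₁ x ^ 2)) -
        (κ * ξ₂ x + (ξ₂ x - ξ₂ x ^ 3) -
          ((∫ y in Ω, (ξ₂ y - ξ₂ y ^ 3)) / ∫ y in Ω, (1 - ξ₂ y ^ 2)) * (1 - ξ₂ x ^ 2))| ≤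
        (3 / 2 + (4 * (volume Ω).toReal / γ + 2 * (volume Ω).toReal ^ 2 / γ ^ 2) / 4) *
          κ * ⨆ y ∈ closure Ω, |ξ₁ y - ξ₂ y| := by
  intro x hx
  have hsub : Ω ⊆ closure Ω := subset_closure
  set μr := (volume Ω).toReal with hμr
  have hμ0 : 0 ≤ μr := ENNReal.toReal_nonneg
  have hclos : IsCompact (closure Ω) := hbdd.isCompact_closure
  set S := ⨆ y ∈ closure Ω, |ξ₁ y - ξ₂ y| with hS
  -- sup properties
  have hinner : ∀ y, (⨆ (_ : y ∈ closure Ω), |ξ₁ y - ξ₂ y|) ≤ 2 := by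
    intro y
    by_cases hy : y ∈ closure Ω
    · haveI : Nonempty (y ∈ closure Ω) := ⟨hy⟩
      rw [ciSup_const]
      calc |ξ₁ y - ξ₂ y| ≤ |ξ₁ y| + |ξ₂ y| := abs_sub _ _
        _ ≤ 2 := by linarith [hbound₁ y hy, hbound₂ y hy]
    · haveI : IsEmpty (y ∈ closure Ω) := ⟨hy⟩
      rw [Real.iSup_of_isEmpty]; norm_num
  have hbdd_range : BddAbove (Set.range fun y => ⨆ (_ : y ∈ closure Ω), |ξ₁ y - ξ₂ y|) := by
    refine ⟨2, ?_⟩; rintro _ ⟨y, rfl⟩; exact hinner y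
  have hSle : ∀ y ∈ closure Ω, |ξ₁ y - ξ₂ y| ≤ S := by
    intro y hy
    haveI : Nonempty (y ∈ closure Ω) := ⟨hy⟩
    have h1 : |ξ₁ y - ξ₂ y| = ⨆ (_ : y ∈ closure Ω), |ξ₁ y - ξ₂ y| := (ciSup_const).symm
    rw [hS, h1]
    exact le_ciSup hbdd_range y
  have hS0 : 0 ≤ S := by
    obtain ⟨x₀, hx₀⟩ := hne
    exact le_trans (abs_nonneg _) (hSle x₀ (hsub hx₀))
  -- integrability
  have hif₁ : IntegrableOn (fun y => ξ₁ y - ξ₁ y ^ 3) Ω volume :=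
    ((hcont₁.sub (hcont₁.pow 3)).integrableOn_compact hclos).mono_set hsub
  have hif₂ : IntegrableOn (fun y => ξ₂ y - ξ₂ y ^ 3) Ω volume :=
    ((hcont₂.sub (hcont₂.pow 3)).integrableOn_compact hclos).mono_set hsub
  have hig₁ : IntegrableOn (fun y => 1 - ξ₁ y ^ 2) Ω volume :=
    ((continuousOn_const.sub (hcont₁.pow 2)).integrableOn_compact hclos).mono_set hsub
  have hig₂ : IntegrableOn (fun y => 1 - ξ₂ y ^ 2) Ω volume :=
    ((continuousOn_const.sub (hcont₂.pow 2)).integrableOn_compact hclos).mono_set hsub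
  -- generic integral bound
  have key : ∀ (h : (Fin d → ℝ) → ℝ) (C : ℝ), IntegrableOn h Ω volume →
      (∀ y ∈ Ω, |h y| ≤ C) → |∫ y in Ω, h y| ≤ C * μr := by
    intro h C hint hb
    have := norm_setIntegral_le_of_norm_le_const (μ := volume) (s := Ω) (f := h) hvol
      (fun y hy => by simpa [Real.norm_eq_abs] using hb y hy)
    rw [Real.norm_eq_abs] at this; exact this
  set F1 := ∫ y in Ω, (ξ₁ y - ξ₁ y ^ 3) with hF1d
  set F2 := ∫ y in Ω, (ξ₂ y - ξ₂ y ^ 3) with hF2d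
  set G1 := ∫ y in Ω, (1 - ξ₁ y ^ 2) with hG1d
  set G2 := ∫ y in Ω, (1 - ξ₂ y ^ 2) with hG2d
  have hG1γ : γ ≤ G1 := hγ₁
  have hG2γ : γ ≤ G2 := hγ₂
  have hG1pos : 0 < G1 := lt_of_lt_of_le hγ hG1γ
  have hG2pos : 0 < G2 := lt_of_lt_of_le hγ hG2γ
  have hF2bd : |F2| ≤ 1 * μr :=
    key _ 1 hif₂ (fun y hy => aux_fbd (hbound₂ y (hsub hy)))
  have hFdiff : |F1 - F2| ≤ (2 * S) * μr := by
    rw [hF1d, hF2d, ← integral_sub hif₁ hif₂]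
    refine key _ (2 * S) (hif₁.sub hif₂) (fun y hy => ?_)
    calc |(ξ₁ y - ξ₁ y ^ 3) - (ξ₂ y - ξ₂ y ^ 3)| ≤ 2 * |ξ₁ y - ξ₂ y| :=
          aux_flip (hbound₁ y (hsub hy)) (hbound₂ y (hsub hy))
      _ ≤ 2 * S := by linarith [hSle y (hsub hy)]
  have hGdiff : |G2 - G1| ≤ (2 * S) * μr := by
    rw [hG1d, hG2d, ← integral_sub hig₂ hig₁]
    refine key _ (2 * S) (hig₂.sub hig₁) (fun y hy => ?_)
    calc |(1 - ξ₂ y ^ 2) - (1 - ξ₁ y ^ 2)| = |(1 - ξ₁ y ^ 2) - (1 - ξ₂ y ^ 2)| := abs_sub_comm _ _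
      _ ≤ 2 * |ξ₁ y - ξ₂ y| := aux_glip (hbound₁ y (hsub hy)) (hbound₂ y (hsub hy))
      _ ≤ 2 * S := by linarith [hSle y (hsub hy)]
  -- lambda bounds
  have hl2 : |F2 / G2| ≤ μr / γ := by
    rw [abs_div, abs_of_pos hG2pos]
    exact div_le_div₀ hμ0 (by linarith) hγ hG2γ
  have hldiff : |F1 / G1 - F2 / G2| ≤ (2 * S * μr) / γ + (1 * μr * ((2 * S) * μr)) / (γ * γ) := by
    have hid : F1 / G1 - F2 / G2 = (F1 - F2) / G1 + (F2 * (G2 - G1)) / (G1 * G2) := by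
      field_simp; ring
    rw [hid]
    have h1 : |(F1 - F2) / G1| ≤ (2 * S * μr) / γ := by
      rw [abs_div, abs_of_pos hG1pos]
      exact div_le_div₀ (by positivity) (by linarith [hFdiff]) hγ hG1γ
    have h2 : |(F2 * (G2 - G1)) / (G1 * G2)| ≤ (1 * μr * ((2 * S) * μr)) / (γ * γ) := by
      rw [abs_div, abs_mul, abs_of_pos (mul_pos hG1pos hG2pos)]
      refine div_le_div₀ (by positivity) ?_ (by positivity) ?_
      · exact mul_le_mul hF2bd hGdiff (abs_nonneg _) (by positivity)
      · exact mul_le_mul hG1γ hG2γ hγ.le (by linarith)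
    calc |(F1 - F2) / G1 + (F2 * (G2 - G1)) / (G1 * G2)|
        ≤ |(F1 - F2) / G1| + |(F2 * (G2 - G1)) / (G1 * G2)| := abs_add_le _ _
      _ ≤ _ := add_le_add h1 h2
  -- pointwise bounds at x
  have hxa : |ξ₁ x| ≤ 1 := hbound₁ x hx
  have hxb : |ξ₂ x| ≤ 1 := hbound₂ x hx
  have hxS : |ξ₁ x - ξ₂ x| ≤ S := hSle x hx
  set a := ξ₁ x
  set b := ξ₂ x
  set l1 := F1 / G1
  set l2 := F2 / G2
  have hid2 : (κ * a + (a - a ^ 3) - l1 * (1 - a ^ 2)) - (κ * b + (b - b ^ 3) - l2 * (1 - b ^ 2))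
      = κ * (a - b) + ((a - a ^ 3) - (b - b ^ 3))
        + (-((l1 - l2) * (1 - a ^ 2) + l2 * ((1 - a ^ 2) - (1 - b ^ 2)))) := by ring
  have hbound : |(κ * a + (a - a ^ 3) - l1 * (1 - a ^ 2)) -
      (κ * b + (b - b ^ 3) - l2 * (1 - b ^ 2))|
      ≤ κ * S + 2 * S + (|l1 - l2| + |l2| * (2 * S)) := by
    rw [hid2]
    have t1 : |κ * (a - b)| ≤ κ * S := by
      rw [abs_mul, abs_of_pos (by linarith : (0:ℝ) < κ)]
      exact mul_le_mul_of_nonneg_left hxS (by linarith)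
    have t2 : |(a - a ^ 3) - (b - b ^ 3)| ≤ 2 * S := by
      calc |(a - a ^ 3) - (b - b ^ 3)| ≤ 2 * |a - b| := aux_flip hxa hxb
        _ ≤ 2 * S := by linarith
    have t3 : |(l1 - l2) * (1 - a ^ 2) + l2 * ((1 - a ^ 2) - (1 - b ^ 2))|
        ≤ |l1 - l2| + |l2| * (2 * S) := by
      have u1 : |(l1 - l2) * (1 - a ^ 2)| ≤ |l1 - l2| := by
        rw [abs_mul]
        calc |l1 - l2| * |1 - a ^ 2| ≤ |l1 - l2| * 1 :=
              mul_le_mul_of_nonneg_left (aux_gbd hxa) (abs_nonneg _)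
          _ = |l1 - l2| := mul_one _
      have u2 : |l2 * ((1 - a ^ 2) - (1 - b ^ 2))| ≤ |l2| * (2 * S) := by
        rw [abs_mul]
        refine mul_le_mul_of_nonneg_left ?_ (abs_nonneg _)
        calc |(1 - a ^ 2) - (1 - b ^ 2)| ≤ 2 * |a - b| := aux_glip hxa hxb
          _ ≤ 2 * S := by linarith
      calc |(l1 - l2) * (1 - a ^ 2) + l2 * ((1 - a ^ 2) - (1 - b ^ 2))|
          ≤ |(l1 - l2) * (1 - a ^ 2)| + |l2 * ((1 - a ^ 2) - (1 - b ^ 2))| := abs_add_le _ _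
        _ ≤ |l1 - l2| + |l2| * (2 * S) := add_le_add u1 u2
    calc |κ * (a - b) + ((a - a ^ 3) - (b - b ^ 3))
          + (-((l1 - l2) * (1 - a ^ 2) + l2 * ((1 - a ^ 2) - (1 - b ^ 2))))|
        ≤ |κ * (a - b) + ((a - a ^ 3) - (b - b ^ 3))|
          + |(-((l1 - l2) * (1 - a ^ 2) + l2 * ((1 - a ^ 2) - (1 - b ^ 2))))| := abs_add_le _ _
      _ ≤ (|κ * (a - b)| + |(a - a ^ 3) - (b - b ^ 3)|)
          + |(l1 - l2) * (1 - a ^ 2) + l2 * ((1 - a ^ 2) - (1 - b ^ 2))| := by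
            rw [abs_neg]; exact add_le_add (abs_add_le _ _) le_rfl
      _ ≤ κ * S + 2 * S + (|l1 - l2| + |l2| * (2 * S)) := by
            refine add_le_add (add_le_add t1 t2) t3
  -- final numeric combination
  refine le_trans hbound ?_
  have hp : (0:ℝ) ≤ μr / γ := by positivity
  have hpow : μr ^ 2 / γ ^ 2 = (μr / γ) * (μr / γ) := by
    field_simp
  have hterm : |l1 - l2| + |l2| * (2 * S)
      ≤ 4 * S * (μr / γ) + 2 * S * ((μr / γ) * (μr / γ)) := by
    have h2 : |l2| * (2 * S) ≤ (μr / γ) * (2 * S) :=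
      mul_le_mul_of_nonneg_right hl2 (by linarith)
    have heq1 : (2 * S * μr) / γ = 2 * S * (μr / γ) := by ring
    have heq2 : (1 * μr * ((2 * S) * μr)) / (γ * γ) = 2 * S * ((μr / γ) * (μr / γ)) := by
      field_simp
    have h3 := hldiff
    rw [heq1, heq2] at h3
    linarith [h3, h2]
  have hfinal := aux_final (k := κ) (S := S) (p := μr / γ)
    (T := |l1 - l2| + |l2| * (2 * S)) hκ hS0 hp hterm
  have hrhs : (3 / 2 + (4 * μr / γ + 2 * μr ^ 2 / γ ^ 2) / 4) * κ * S
      = (3/2) * κ * S + κ * S * (μr / γ) + (κ / 2) * S * ((μr / γ) * (μr / γ)) := by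
    field_simp; ring
  rw [hrhs]
  exact hfinal
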